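/- Let n be an odd positive integer, d a divisor of n with n | d², and ℓ an integer with ℓ² ≡ 1 (mod d²/n). Define B̃(d,ℓ) as the matrix indexed by ℤ/nℤ with B̃(d,ℓ)_{a,b} = 1 if n | d·a and b ≡ a·ℓ (mod d), else 0. Let S̃ be the matrix S̃_{a,b} = n^{-1/2}·exp(2πi ab/n). Then B̃(d,ℓ)·S̃ = S̃·B̃(d,ℓ). -/

import Mathlib

open Complex



/-- The 0-1 matrix `B̃(d,ℓ)` indexed by `ℤ/nℤ`:
entry `(a,b)` is `1` iff `n ∣ d·a` and `b ≡ a·ℓ (mod d)`. -/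
noncomputable def Btilde (n d : ℕ) (ℓ : ℤ) : Matrix (ZMod n) (ZMod n) ℂ :=
  fun a b => if n ∣ d * a.val ∧ (d : ℤ) ∣ ((b.val : ℤ) - (a.val : ℤ) * ℓ) then 1 else 0

/-- The normalized discrete Fourier transform matrix `S̃`. -/
noncomputable def Stilde (n : ℕ) : Matrix (ZMod n) (ZMod n) ℂ :=
  fun a b => ((n : ℂ) ^ ((1 : ℂ) / 2))⁻¹ *
    Complex.exp (2 * Real.pi * Complex.I * (a.val : ℂ) * (b.val : ℂ) / n)

section Helpers
open Finset

noncomputable def Ee (n : ℕ) (x : ℤ) : ℂ := Complex.exp (2 * Real.pi * Complex.I * x / n)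

lemma Ee_add (n : ℕ) (x y : ℤ) : Ee n (x + y) = Ee n x * Ee n y := by
  rw [Ee, Ee, Ee, ← Complex.exp_add]
  congr 1
  push_cast
  ring

lemma Ee_congr (n : ℕ) (hn : n ≠ 0) {x y : ℤ} (h : (n:ℤ) ∣ x - y) : Ee n x = Ee n y := by
  obtain ⟨t, ht⟩ := h
  have hx : x = y + n * t := by linarith
  rw [hx, Ee_add]
  have : Ee n ((n:ℤ) * t) = 1 := by
    rw [Ee]
    have hne : (n:ℂ) ≠ 0 := by exact_mod_cast hn
    have : 2 * (Real.pi:ℂ) * Complex.I * ((n:ℤ) * t : ℤ) / n = (t:ℤ) * (2 * Real.pi * Complex.I) := by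
      push_cast
      field_simp
    rw [this, Complex.exp_int_mul_two_pi_mul_I]
  rw [this, mul_one]

lemma gsum (n d m : ℕ) (hn : d * m = n) (hd : 0 < d) (hm : 0 < m) (x : ℤ) :
    ∑ s ∈ Finset.range m, Ee n (x * (d * s)) = if (m:ℤ) ∣ x then (m:ℂ) else 0 := by
  have hdC : (d:ℂ) ≠ 0 := Nat.cast_ne_zero.mpr hd.ne'
  have hmC : (m:ℂ) ≠ 0 := Nat.cast_ne_zero.mpr hm.ne'
  set r : ℂ := Complex.exp (2 * Real.pi * Complex.I * x / m) with hr
  have hterm : ∀ s : ℕ, Ee n (x * (d * s)) = r ^ s := by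
    intro s
    rw [Ee, hr, ← Complex.exp_nat_mul]
    congr 1
    rw [← hn]
    push_cast
    field_simp
  simp only [hterm]
  by_cases hdvd : (m:ℤ) ∣ x
  · obtain ⟨t, ht⟩ := hdvd
    have hr1 : r = 1 := by
      rw [hr, ht]
      have : 2 * (Real.pi:ℂ) * Complex.I * ((m * t : ℤ):ℂ) / m = (t:ℤ) * (2 * Real.pi * Complex.I) := by
        push_cast
        field_simp
      rw [this, Complex.exp_int_mul_two_pi_mul_I]
    rw [if_pos ⟨t, ht⟩]
    simp [hr1]
  · have hr1 : r ≠ 1 := by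
      intro h
      rw [hr, Complex.exp_eq_one_iff] at h
      obtain ⟨j, hj⟩ := h
      apply hdvd
      refine ⟨j, ?_⟩
      have h2 : (2 * (Real.pi:ℂ) * Complex.I) ≠ 0 := by
        simp [Real.pi_ne_zero, Complex.I_ne_zero]
      rw [div_eq_iff hmC] at hj
      have h3 : (2*(Real.pi:ℂ)*Complex.I) * (x:ℂ) = (2*(Real.pi:ℂ)*Complex.I) * ((m:ℂ)*(j:ℂ)) := by
        linear_combination hj
      have : (x:ℂ) = ((m * j : ℤ) : ℂ) := by
        push_cast
        exact mul_left_cancel₀ h2 h3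
      exact_mod_cast this
    rw [if_neg hdvd, geom_sum_eq hr1]
    have hrm : r ^ m = 1 := by
      rw [hr, ← Complex.exp_nat_mul]
      have : (m:ℂ) * (2 * Real.pi * Complex.I * x / m) = (x:ℤ) * (2 * Real.pi * Complex.I) := by
        push_cast
        field_simp
      rw [this, Complex.exp_int_mul_two_pi_mul_I]
    rw [hrm]
    simp

lemma filter1 (n d m : ℕ) (hn : d * m = n) (hd : 0 < d) (hm : 0 < m) (x : ℤ) :
    (Finset.range n).filter (fun c : ℕ => (d:ℤ) ∣ (c:ℤ) - x)
      = (Finset.range m).image (fun j => (x % (d:ℤ)).toNat + d * j) := by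
  have hdZ : (0:ℤ) < (d:ℤ) := by exact_mod_cast hd
  have hr0 : 0 ≤ x % (d:ℤ) := Int.emod_nonneg x hdZ.ne'
  have hrd : x % (d:ℤ) < d := Int.emod_lt_of_pos x hdZ
  set r : ℕ := (x % (d:ℤ)).toNat with hrdef
  have hrZ : (r:ℤ) = x % d := Int.toNat_of_nonneg hr0
  have hxr : (d:ℤ) ∣ x - r := by
    refine ⟨x / d, ?_⟩
    have := Int.mul_ediv_add_emod x d
    rw [hrZ]
    linarith
  ext c
  simp only [Finset.mem_filter, Finset.mem_image, Finset.mem_range]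
  constructor
  · rintro ⟨hc, hdvd⟩
    have hcr : (d:ℤ) ∣ (c:ℤ) - r := by
      have : (c:ℤ) - r = ((c:ℤ) - x) + (x - r) := by ring
      rw [this]; exact dvd_add hdvd hxr
    obtain ⟨q, hq⟩ := hcr
    have hq0 : 0 ≤ q := by
      nlinarith [hrd, hrZ, Int.natCast_nonneg c]
    have hqm : q < m := by
      have hcn : (c:ℤ) < (d:ℤ) * m := by exact_mod_cast hn ▸ hc
      nlinarith [hr0, hrZ]
    refine ⟨q.toNat, by omega, ?_⟩
    have : ((r + d * q.toNat : ℕ) : ℤ) = (c:ℤ) := by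
      push_cast [Int.toNat_of_nonneg hq0]
      linarith
    exact_mod_cast this
  · rintro ⟨j, hj, hc⟩
    constructor
    · have h1 : r < d := by omega
      have h2 : r + d * j < d * (j+1) := by
        have : d * (j+1) = d * j + d := by ring
        omega
      have h3 : d * (j+1) ≤ d * m := Nat.mul_le_mul_left d hj
      omega
    · rw [← hc]
      refine ⟨(j:ℤ) - x / d, ?_⟩
      have := Int.mul_ediv_add_emod x d
      push_cast
      rw [hrZ]
      linarith [this]

lemma key1 (n d m : ℕ) (hn : d * m = n) (hd : 0 < d) (hm : 0 < m) (x y : ℤ) :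
    ∑ c ∈ Finset.range n, (if (d:ℤ) ∣ (c:ℤ) - x then (1:ℂ) else 0) * Ee n (c * y)
      = if (m:ℤ) ∣ y then (m:ℂ) * Ee n (x * y) else 0 := by
  have step1 : ∑ c ∈ Finset.range n, (if (d:ℤ) ∣ (c:ℤ) - x then (1:ℂ) else 0) * Ee n (c * y)
      = ∑ c ∈ (Finset.range n).filter (fun c : ℕ => (d:ℤ) ∣ (c:ℤ) - x), Ee n (c * y) := by
    rw [Finset.sum_filter]
    exact Finset.sum_congr rfl (fun c _ => by split <;> simp
      )
  rw [step1, filter1 n d m hn hd hm x, Finset.sum_image (by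
    intro j1 _ j2 _ h
    exact Nat.eq_of_mul_eq_mul_left hd (by beta_reduce at h; omega))]
  set r : ℕ := (x % (d:ℤ)).toNat with hrdef
  have hdZ : (0:ℤ) < (d:ℤ) := by exact_mod_cast hd
  have hrZ : (r:ℤ) = x % d := Int.toNat_of_nonneg (Int.emod_nonneg x hdZ.ne')
  have step2 : ∀ j : ℕ, Ee n (((r + d * j : ℕ) : ℤ) * y) = Ee n ((r:ℤ) * y) * Ee n (y * ((d:ℤ) * j)) := by
    intro j
    rw [← Ee_add]
    congr 1
    push_cast
    ring
  simp only [step2]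
  rw [← Finset.mul_sum, gsum n d m hn hd hm y]
  by_cases hy : (m:ℤ) ∣ y
  · rw [if_pos hy, if_pos hy]
    have hEq : Ee n ((r:ℤ) * y) = Ee n (x * y) := by
      apply Ee_congr n (hn ▸ (Nat.mul_pos hd hm).ne')
      obtain ⟨u, hu⟩ := hy
      refine ⟨-((x / d) * u), ?_⟩
      have := Int.mul_ediv_add_emod x d
      have hxr : x - r = (d:ℤ) * (x / d) := by rw [hrZ]; linarith
      have : (r:ℤ) * y - x * y = -((x - r) * y) := by ring
      rw [this, hxr, hu, ← hn]
      push_cast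
      ring
    rw [hEq]
    ring
  · simp [hy]

lemma filter2 (n d m k : ℕ) (hn : d * m = n) (hk : m * k = d) (hm : 0 < m) (hk0 : 0 < k)
    (ℓ u : ℤ) (hl : (k:ℤ) ∣ ℓ * ℓ - 1) :
    (Finset.range n).filter (fun c : ℕ => (m:ℤ) ∣ (c:ℤ) ∧ (d:ℤ) ∣ (m:ℤ) * u - (c:ℤ) * ℓ)
      = (Finset.range m).image (fun s => m * ((ℓ * u) % (k:ℤ)).toNat + d * s) := by
  have hd : 0 < d := hk ▸ Nat.mul_pos hm hk0
  have hkZ : (0:ℤ) < (k:ℤ) := by exact_mod_cast hk0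
  have hmZ : ((m:ℤ)) ≠ 0 := by exact_mod_cast hm.ne'
  have hρ0 : 0 ≤ (ℓ * u) % (k:ℤ) := Int.emod_nonneg _ hkZ.ne'
  have hρk : (ℓ * u) % (k:ℤ) < k := Int.emod_lt_of_pos _ hkZ
  set ρ : ℕ := ((ℓ * u) % (k:ℤ)).toNat with hρdef
  have hρZ : (ρ:ℤ) = (ℓ * u) % k := Int.toNat_of_nonneg hρ0
  have hkρ : (k:ℤ) ∣ ℓ * u - ρ := by
    refine ⟨(ℓ * u) / k, ?_⟩
    have := Int.mul_ediv_add_emod (ℓ * u) k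
    rw [hρZ]; linarith
  have hdZ : ((d:ℤ)) = (m:ℤ) * k := by exact_mod_cast hk.symm
  ext c
  simp only [Finset.mem_filter, Finset.mem_image, Finset.mem_range]
  constructor
  · rintro ⟨hc, hmc, hdc⟩
    obtain ⟨t, ht⟩ := hmc
    have ht0 : 0 ≤ t := by nlinarith [Int.natCast_nonneg c, ht]
    have hktl : (k:ℤ) ∣ u - t * ℓ := by
      have h1 : (m:ℤ) * ((k:ℤ)) ∣ (m:ℤ) * (u - t * ℓ) := by
        rw [← hdZ]
        have : (m:ℤ) * (u - t * ℓ) = (m:ℤ) * u - (c:ℤ) * ℓ := by rw [ht]; ring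
        rw [this]; exact hdc
      exact (mul_dvd_mul_iff_left hmZ).mp h1
    have hktρ : (k:ℤ) ∣ t - ρ := by
      have h2 : (k:ℤ) ∣ t * (ℓ * ℓ - 1) := Dvd.dvd.mul_left hl t
      have : t - ρ = -(ℓ * (u - t * ℓ)) - t * (ℓ * ℓ - 1) + (ℓ * u - ρ) := by ring
      rw [this]
      exact dvd_add (dvd_sub (dvd_neg.mpr (Dvd.dvd.mul_left hktl ℓ)) h2) hkρ
    obtain ⟨q, hq⟩ := hktρ
    have htd : t < (d:ℤ) := by
      have hcn : (c:ℤ) < (n:ℤ) := by exact_mod_cast hc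
      have : (m:ℤ) * t < (d:ℤ) * m := by rw [← ht]; exact_mod_cast hn ▸ hcn
      nlinarith
    have hq0 : 0 ≤ q := by nlinarith
    have hqm : q < m := by
      have : (k:ℤ) * q < (m:ℤ) * k := by rw [← hdZ]; omega
      nlinarith
    refine ⟨q.toNat, by omega, ?_⟩
    have : ((m * ρ + d * q.toNat : ℕ) : ℤ) = (c:ℤ) := by
      push_cast [Int.toNat_of_nonneg hq0]
      rw [ht, hdZ]
      nlinarith [hq]
    exact_mod_cast this
  · rintro ⟨s, hs, hcs⟩
    have hmρd : m * ρ < d := by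
      have : ρ < k := by omega
      calc m * ρ < m * k := by exact (Nat.mul_lt_mul_left hm).mpr this
        _ = d := hk
    refine ⟨?_, ?_, ?_⟩
    · have h2 : m * ρ + d * s < d * (s+1) := by
        have : d * (s+1) = d * s + d := by ring
        omega
      have h3 : d * (s+1) ≤ d * m := Nat.mul_le_mul_left d hs
      omega
    · rw [← hcs]; push_cast [hdZ]; exact ⟨(ρ:ℤ) + k * s, by ring⟩
    · rw [← hcs]
      have hkuρ : (k:ℤ) ∣ u - ρ * ℓ := by
        have h1 : (k:ℤ) ∣ u * (ℓ * ℓ - 1) := Dvd.dvd.mul_left hl u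
        have : u - (ρ:ℤ) * ℓ = -(u * (ℓ * ℓ - 1)) + ℓ * (ℓ * u - ρ) := by ring
        rw [this]
        exact dvd_add (dvd_neg.mpr h1) (Dvd.dvd.mul_left hkρ ℓ)
      obtain ⟨w, hw⟩ := hkuρ
      refine ⟨w - (s:ℤ) * ℓ, ?_⟩
      push_cast [hdZ]
      nlinarith [hw]

lemma key2 (n d m k : ℕ) (hn : d * m = n) (hk : m * k = d) (hm : 0 < m) (hk0 : 0 < k)
    (ℓ : ℤ) (hl : (k:ℤ) ∣ ℓ * ℓ - 1) (x y : ℤ) :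
    ∑ c ∈ Finset.range n, (if (m:ℤ) ∣ (c:ℤ) ∧ (d:ℤ) ∣ y - (c:ℤ) * ℓ then (1:ℂ) else 0) * Ee n (x * c)
      = if (m:ℤ) ∣ x ∧ (m:ℤ) ∣ y then (m:ℂ) * Ee n (x * ℓ * y) else 0 := by
  have hd : 0 < d := hk ▸ Nat.mul_pos hm hk0
  have hmd : (m:ℤ) ∣ (d:ℤ) := ⟨k, by exact_mod_cast hk.symm⟩
  by_cases hy : (m:ℤ) ∣ y
  · obtain ⟨u, hu⟩ := hy
    subst hu
    have step1 : ∑ c ∈ Finset.range n,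
        (if (m:ℤ) ∣ (c:ℤ) ∧ (d:ℤ) ∣ (m:ℤ) * u - (c:ℤ) * ℓ then (1:ℂ) else 0) * Ee n (x * c)
        = ∑ c ∈ (Finset.range n).filter
            (fun c : ℕ => (m:ℤ) ∣ (c:ℤ) ∧ (d:ℤ) ∣ (m:ℤ) * u - (c:ℤ) * ℓ), Ee n (x * c) := by
      rw [Finset.sum_filter]
      exact Finset.sum_congr rfl (fun c _ => by split <;> simp)
  
    rw [step1, filter2 n d m k hn hk hm hk0 ℓ u hl, Finset.sum_image (by
      intro j1 _ j2 _ h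
      exact Nat.eq_of_mul_eq_mul_left hd (by beta_reduce at h; omega))]
    set ρ : ℕ := ((ℓ * u) % (k:ℤ)).toNat with hρdef
    have hkZ : (0:ℤ) < (k:ℤ) := by exact_mod_cast hk0
    have hρZ : (ρ:ℤ) = (ℓ * u) % k := Int.toNat_of_nonneg (Int.emod_nonneg _ hkZ.ne')
    have hkρ : (k:ℤ) ∣ ℓ * u - ρ := by
      refine ⟨(ℓ * u) / k, ?_⟩
      have := Int.mul_ediv_add_emod (ℓ * u) k
      rw [hρZ]; linarith
    have step2 : ∀ s : ℕ, Ee n (x * ((m * ρ + d * s : ℕ) : ℤ))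
        = Ee n (x * ((m:ℤ) * ρ)) * Ee n (x * ((d:ℤ) * s)) := by
      intro s
      rw [← Ee_add]
      congr 1
      push_cast
      ring
    simp only [step2]
    rw [← Finset.mul_sum, gsum n d m hn hd hm x]
    by_cases hx : (m:ℤ) ∣ x
    · rw [if_pos hx, if_pos ⟨hx, ⟨u, rfl⟩⟩]
      have hEq : Ee n (x * ((m:ℤ) * ρ)) = Ee n (x * ℓ * ((m:ℤ) * u)) := by
        apply Ee_congr n (hn ▸ (Nat.mul_pos hd hm).ne')
        obtain ⟨v, hv⟩ := hx
        obtain ⟨w, hw⟩ := hkρ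
        refine ⟨-(v * w), ?_⟩
        have hnZ : (n:ℤ) = (m:ℤ) * k * m := by
          rw [← hn, ← hk]; push_cast; ring
        rw [hv, hnZ]
        linear_combination (-(m:ℤ)*(m:ℤ)*v) * hw
      rw [hEq]
      ring
    · rw [if_neg hx, if_neg (fun h => hx h.1)]
      ring
  · have hzero : ∀ c ∈ Finset.range n,
        (if (m:ℤ) ∣ (c:ℤ) ∧ (d:ℤ) ∣ y - (c:ℤ) * ℓ then (1:ℂ) else 0) * Ee n (x * c) = 0 := by
      intro c _
      rw [if_neg, zero_mul]
      rintro ⟨h1, h2⟩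
      apply hy
      have h3 : (m:ℤ) ∣ y - (c:ℤ) * ℓ := dvd_trans hmd h2
      have : y = (y - (c:ℤ) * ℓ) + (c:ℤ) * ℓ := by ring
      rw [this]
      exact dvd_add h3 (Dvd.dvd.mul_right h1 ℓ)
    rw [Finset.sum_congr rfl hzero, Finset.sum_const_zero, if_neg (fun h => hy h.2)]

lemma sum_zmod (n : ℕ) [NeZero n] (f : ℕ → ℂ) :
    ∑ c : ZMod n, f (ZMod.val c) = ∑ i ∈ Finset.range n, f i := by
  apply Finset.sum_nbij' (i := fun c : ZMod n => ZMod.val c) (j := fun i : ℕ => (i : ZMod n))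
  · intro c _; exact Finset.mem_range.mpr (ZMod.val_lt c)
  · intro i _; exact Finset.mem_univ _
  · intro c _; exact ZMod.natCast_rightInverse c
  · intro i hi; exact ZMod.val_cast_of_lt (Finset.mem_range.mp hi)
  · intro c _; rfl

end Helpers

/-- `B̃(d,ℓ)` commutes with `S̃`. -/
theorem Btilde_commute_Stilde (n d : ℕ) [NeZero n] (hodd : Odd n) (hpos : 0 < n)
    (hd : d ∣ n) (hnd : n ∣ d ^ 2) (ℓ : ℤ)
    (hl : ℓ ^ 2 ≡ 1 [ZMOD ((d ^ 2 / n : ℕ) : ℤ)]) :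
    Btilde n d ℓ * Stilde n = Stilde n * Btilde n d ℓ := by
  have hn0 : n ≠ 0 := hpos.ne'
  have hd0 : 0 < d := by
    rcases Nat.eq_zero_or_pos d with h | h
    · subst h; exact absurd (Nat.eq_zero_of_zero_dvd hd) hn0
    · exact h
  obtain ⟨m, hm⟩ := hd
  have hdm : d * m = n := hm.symm
  have hm0 : 0 < m := by
    rcases Nat.eq_zero_or_pos m with h | h
    · subst h; simp at hdm; exact absurd hdm.symm hn0
    · exact h
  have hmd : m ∣ d := by
    have h1 : d * m ∣ d * d := by rw [hdm]; simpa [pow_two] using hnd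
    exact (Nat.mul_dvd_mul_iff_left hd0).mp h1
  obtain ⟨k, hk⟩ := hmd
  have hmk : m * k = d := hk.symm
  have hk0 : 0 < k := by
    rcases Nat.eq_zero_or_pos k with h | h
    · subst h; simp at hk; omega
    · exact h
  have hkval : d ^ 2 / n = k := by
    rw [pow_two, ← hdm]
    have : d * d = (d * m) * k := by rw [mul_assoc, ← hk]
    rw [this]
    exact Nat.mul_div_cancel_left k (by positivity)
  have hlk : (k:ℤ) ∣ ℓ * ℓ - 1 := by
    rw [hkval] at hl
    have h2 := Int.ModEq.dvd hl
    have : ℓ * ℓ - 1 = -(1 - ℓ ^ 2) := by ring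
    rw [this]
    exact dvd_neg.mpr h2
  -- index conversion facts
  have hcond : ∀ i : ℕ, (n ∣ d * i) ↔ ((m:ℤ) ∣ (i:ℤ)) := by
    intro i
    rw [← hdm, Nat.mul_dvd_mul_iff_left hd0]
    exact Int.natCast_dvd_natCast.symm
  set K : ℂ := ((n : ℂ) ^ ((1 : ℂ) / 2))⁻¹ with hK
  have hSt : ∀ a c : ZMod n, Stilde n a c = K * Ee n ((a.val : ℤ) * (c.val : ℤ)) := by
    intro a c
    show _ = K * Ee n _
    rw [Ee, Stilde, hK]
    congr 2
    push_cast
    ring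
  ext a b
  rw [Matrix.mul_apply, Matrix.mul_apply]
  have hLHS : ∑ c : ZMod n, Btilde n d ℓ a c * Stilde n c b
      = ∑ i ∈ Finset.range n,
          (if n ∣ d * a.val ∧ (d:ℤ) ∣ (i:ℤ) - (a.val:ℤ) * ℓ then (1:ℂ) else 0)
            * (K * Ee n ((i:ℤ) * (b.val:ℤ))) := by
    rw [← sum_zmod n (fun i => (if n ∣ d * a.val ∧ (d:ℤ) ∣ (i:ℤ) - (a.val:ℤ) * ℓ then (1:ℂ) else 0)
            * (K * Ee n ((i:ℤ) * (b.val:ℤ))))]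
    exact Finset.sum_congr rfl (fun c _ => by rw [hSt c b]; rfl)
  have hRHS : ∑ c : ZMod n, Stilde n a c * Btilde n d ℓ c b
      = ∑ i ∈ Finset.range n,
          (K * Ee n ((a.val:ℤ) * (i:ℤ)))
            * (if n ∣ d * i ∧ (d:ℤ) ∣ (b.val:ℤ) - (i:ℤ) * ℓ then (1:ℂ) else 0) := by
    rw [← sum_zmod n (fun i => (K * Ee n ((a.val:ℤ) * (i:ℤ)))
            * (if n ∣ d * i ∧ (d:ℤ) ∣ (b.val:ℤ) - (i:ℤ) * ℓ then (1:ℂ) else 0))]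
    exact Finset.sum_congr rfl (fun c _ => by rw [hSt a c]; rfl)
  rw [hLHS, hRHS]
  have hRHSval : ∑ i ∈ Finset.range n,
      (K * Ee n ((a.val:ℤ) * (i:ℤ)))
        * (if n ∣ d * i ∧ (d:ℤ) ∣ (b.val:ℤ) - (i:ℤ) * ℓ then (1:ℂ) else 0)
      = K * (if (m:ℤ) ∣ (a.val:ℤ) ∧ (m:ℤ) ∣ (b.val:ℤ)
          then (m:ℂ) * Ee n ((a.val:ℤ) * ℓ * (b.val:ℤ)) else 0) := by
    rw [← key2 n d m k hdm hmk hm0 hk0 ℓ hlk (a.val:ℤ) (b.val:ℤ), Finset.mul_sum]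
    refine Finset.sum_congr rfl (fun i _ => ?_)
    rw [if_congr (and_congr_left' (hcond i)) rfl rfl]
    ring
  rw [hRHSval]
  by_cases ha : n ∣ d * a.val
  · have haM : (m:ℤ) ∣ (a.val:ℤ) := (hcond a.val).mp ha
    have hLHSval : ∑ i ∈ Finset.range n,
        (if n ∣ d * a.val ∧ (d:ℤ) ∣ (i:ℤ) - (a.val:ℤ) * ℓ then (1:ℂ) else 0)
          * (K * Ee n ((i:ℤ) * (b.val:ℤ)))
        = K * (if (m:ℤ) ∣ (b.val:ℤ)
            then (m:ℂ) * Ee n (((a.val:ℤ) * ℓ) * (b.val:ℤ)) else 0) := by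
      rw [← key1 n d m hdm hd0 hm0 ((a.val:ℤ) * ℓ) (b.val:ℤ), Finset.mul_sum]
      refine Finset.sum_congr rfl (fun i _ => ?_)
      have : (n ∣ d * a.val ∧ (d:ℤ) ∣ (i:ℤ) - (a.val:ℤ) * ℓ) ↔ ((d:ℤ) ∣ (i:ℤ) - (a.val:ℤ) * ℓ) :=
        and_iff_right ha
      rw [if_congr this rfl rfl]
      ring
    rw [hLHSval]
    by_cases hb : (m:ℤ) ∣ (b.val:ℤ)
    · rw [if_pos hb, if_pos ⟨haM, hb⟩]
    · rw [if_neg hb, if_neg (fun h => hb h.2)]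
  · have haM : ¬ (m:ℤ) ∣ (a.val:ℤ) := fun h => ha ((hcond a.val).mpr h)
    have hLHS0 : ∑ i ∈ Finset.range n,
        (if n ∣ d * a.val ∧ (d:ℤ) ∣ (i:ℤ) - (a.val:ℤ) * ℓ then (1:ℂ) else 0)
          * (K * Ee n ((i:ℤ) * (b.val:ℤ))) = 0 := by
      refine Finset.sum_eq_zero (fun i _ => ?_)
      rw [if_neg (fun h => ha h.1), zero_mul]
    rw [hLHS0, if_neg (fun h => haM h.1), mul_zero]
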